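/- For every integer k ≥ 1 with k ≡ 1 (mod 24), there exists a finite simple graph G with maximum degree at most 3 and with exactly (53/24)(k−1) vertices such that every nonempty induced subgraph H of G has at most k−1 vertices whose degree in H equals the maximum degree of H. (Equivalently, h(k,3) ≥ (53/24)(k−1) for infinitely many k.) -/

import Mathlib

/-- The degree of a vertex: the number of its neighbors (graph on a finite type). -/
noncomputable def ndeg {V : Type*} (G : SimpleGraph V) (v : V) : ℕ :=
  (G.neighborSet v).ncard

/-- The maximum degree of a graph (on a finite type). -/
noncomputable def maxDeg {V : Type*} (G : SimpleGraph V) : ℕ :=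
  sSup (Set.range (ndeg G))

/-- The number of vertices of `G` whose degree equals the maximum degree of `G`. -/
noncomputable def maxRepCount {V : Type*} (G : SimpleGraph V) : ℕ :=
  {v : V | ndeg G v = maxDeg G}.ncard

/-! ### Set-level degree, max degree and repetition count -/

noncomputable def dS {V : Type*} (G : SimpleGraph V) (s : Set V) (v : V) : ℕ :=
  (s ∩ G.neighborSet v).ncard

noncomputable def MDS {V : Type*} (G : SimpleGraph V) (s : Set V) : ℕ :=
  sSup (dS G s '' s)

noncomputable def MRS {V : Type*} (G : SimpleGraph V) (s : Set V) : ℕ :=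
  {v | v ∈ s ∧ dS G s v = MDS G s}.ncard

lemma image_nbhd {V : Type*} (G : SimpleGraph V) (s : Set V) (v : s) :
    Subtype.val '' ((G.induce s).neighborSet v) = s ∩ G.neighborSet ↑v := by
  ext x
  constructor
  · rintro ⟨u, hu, rfl⟩
    exact ⟨u.2, hu⟩
  · rintro ⟨hx, hadj⟩
    exact ⟨⟨x, hx⟩, hadj, rfl⟩

lemma ndeg_induce {V : Type*} (G : SimpleGraph V) (s : Set V) (v : s) :
    ndeg (G.induce s) v = dS G s ↑v := by
  rw [ndeg, dS, ← image_nbhd, Set.ncard_image_of_injective _ Subtype.val_injective]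

lemma maxDeg_induce {V : Type*} (G : SimpleGraph V) (s : Set V) :
    maxDeg (G.induce s) = MDS G s := by
  rw [maxDeg, MDS]
  congr 1
  have : ndeg (G.induce s) = (dS G s) ∘ Subtype.val := funext (ndeg_induce G s)
  rw [this, Set.range_comp, Subtype.range_coe]

lemma maxRepCount_induce {V : Type*} (G : SimpleGraph V) (s : Set V) :
    maxRepCount (G.induce s) = MRS G s := by
  rw [maxRepCount, MRS, ← Set.ncard_image_of_injective _ Subtype.val_injective]
  congr 1
  ext x
  constructor
  · rintro ⟨u, hu, rfl⟩
    simp only [Set.mem_setOf_eq] at hu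
    rw [ndeg_induce, maxDeg_induce] at hu
    exact ⟨u.2, hu⟩
  · rintro ⟨hx, hdx⟩
    exact ⟨⟨x, hx⟩, by simpa [Set.mem_setOf_eq, ndeg_induce, maxDeg_induce], rfl⟩

/-! ### Basic facts about `dS`, `MDS`, `MRS` -/

lemma dS_le_MDS {V : Type*} [Fintype V] (G : SimpleGraph V) (s : Set V) {v : V} (hv : v ∈ s) :
    dS G s v ≤ MDS G s :=
  le_csSup ((s.toFinite.image _).bddAbove) (Set.mem_image_of_mem _ hv)

lemma MDS_le {V : Type*} (G : SimpleGraph V) (s : Set V) (b : ℕ)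
    (h : ∀ v ∈ s, dS G s v ≤ b) : MDS G s ≤ b := by
  rcases s.eq_empty_or_nonempty with rfl | hs
  · simp [MDS, csSup_empty]
  · exact csSup_le (hs.image _) (by rintro x ⟨v, hv, rfl⟩; exact h v hv)

lemma dS_eq_of_fiber {V : Type*} (G : SimpleGraph V) (q : V → ℕ)
    (hadj : ∀ u v, G.Adj u v → q u = q v) (s : Set V) (f : ℕ) {v : V} (hv : q v = f) :
    dS G s v = dS G (s ∩ {w | q w = f}) v := by
  unfold dS
  congr 1
  ext u
  simp only [Set.mem_inter_iff, SimpleGraph.mem_neighborSet, Set.mem_setOf_eq]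
  constructor
  · rintro ⟨hu, ha⟩
    exact ⟨⟨hu, by rw [← hadj v u ha, hv]⟩, ha⟩
  · rintro ⟨⟨hu, _⟩, ha⟩
    exact ⟨hu, ha⟩

/-- If edges only join vertices in the same fiber of `q`, then the number of maximum-degree
vertices of any induced subgraph is bounded by the sum of per-fiber bounds. -/
lemma fiber_bound {V : Type*} [Fintype V] (G : SimpleGraph V) (q : V → ℕ) (N : ℕ)
    (hq : ∀ v, q v < N) (hadj : ∀ u v, G.Adj u v → q u = q v) (c : ℕ → ℕ → ℕ)
    (hc : ∀ f, ∀ t : Set V, t ⊆ {v | q v = f} → t.Nonempty → MRS G t ≤ c f (MDS G t))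
    (s : Set V) :
    MRS G s ≤ ∑ f ∈ Finset.range N, c f (MDS G s) := by
  classical
  set D := MDS G s with hD
  set A : Finset V := Finset.univ.filter (fun v => v ∈ s ∧ dS G s v = D) with hA
  have hMRS : MRS G s = A.card := by
    rw [MRS, ← Set.ncard_coe_finset]
    congr 1
    ext v
    simp [hA, hD]
  rw [hMRS, Finset.card_eq_sum_card_fiberwise (f := q) (t := Finset.range N)
    (fun v _ => Finset.mem_range.mpr (hq v))]
  apply Finset.sum_le_sum
  intro f _
  rcases (A.filter (fun v => q v = f)).eq_empty_or_nonempty with he | ⟨v₀, hv₀⟩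
  · simp [he]
  · have hv₀' := Finset.mem_filter.mp hv₀
    have hv₀A := Finset.mem_filter.mp hv₀'.1
    set t : Set V := s ∩ {w | q w = f} with ht
    have htf : t ⊆ {w | q w = f} := Set.inter_subset_right
    have hv₀t : v₀ ∈ t := ⟨hv₀A.2.1, hv₀'.2⟩
    have hdeq : ∀ v ∈ t, dS G t v = dS G s v := by
      intro v hv
      exact (dS_eq_of_fiber G q hadj s f hv.2).symm
    have hMDle : MDS G t ≤ D := by
      apply MDS_le
      intro v hv
      rw [hdeq v hv]
      exact dS_le_MDS G s hv.1
    have hMDeq : MDS G t = D := by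
      refine le_antisymm hMDle ?_
      have h1 : dS G t v₀ = D := by rw [hdeq v₀ hv₀t]; exact hv₀A.2.2
      rw [← h1]
      exact dS_le_MDS G t hv₀t
    have hsub : (↑(A.filter (fun v => q v = f)) : Set V) ⊆
        {v | v ∈ t ∧ dS G t v = MDS G t} := by
      intro v hv
      simp only [Finset.coe_filter, Set.mem_setOf_eq, hA, Finset.mem_filter] at hv
      obtain ⟨⟨_, hvs, hvd⟩, hvq⟩ := hv
      have hvt : v ∈ t := ⟨hvs, hvq⟩
      refine ⟨hvt, ?_⟩
      rw [hdeq v hvt, hvd, hMDeq]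
    calc (A.filter (fun v => q v = f)).card
        = (↑(A.filter (fun v => q v = f)) : Set V).ncard := (Set.ncard_coe_finset _).symm
      _ ≤ MRS G t := Set.ncard_le_ncard hsub (Set.toFinite _)
      _ ≤ c f (MDS G t) := hc f t htf ⟨v₀, hv₀t⟩
      _ = c f D := by rw [hMDeq]

/-! ### The three 8-vertex block types, given by adjacency bitmasks -/

def tbl (b : ℕ) : List ℕ :=
  if b % 6 = 0 then [168,144,96,65,130,5,12,19]
  else if b % 6 = 5 then [208,160,64,0,1,130,5,35]
  else [104,208,32,193,130,5,11,26]

def mat (b u v : ℕ) : Bool := ((tbl b).getD (u % 8) 0).testBit (v % 8)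

def profT (b d : ℕ) : ℕ :=
  (([[3,4,5,2],[3,4,4,5],[3,4,4,5],[3,4,4,5],[3,4,4,5],[4,4,3,2]].getD (b % 6) []).getD d 0)

lemma mat_mod (b u v : ℕ) : mat b u v = mat (b % 6) (u % 8) (v % 8) := by
  simp [mat, tbl, Nat.mod_mod_of_dvd, Nat.mod_mod]

lemma mat_mod6 (b u v : ℕ) : mat (b % 6) u v = mat b u v := by
  simp [mat, tbl, Nat.mod_mod_of_dvd]

lemma mat_symm (b u v : ℕ) : mat b u v = mat b v u := by
  rw [mat_mod, mat_mod b v u]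
  have h : ∀ b' < 6, ∀ u' < 8, ∀ v' < 8, mat b' u' v' = mat b' v' u' := by decide
  exact h _ (Nat.mod_lt _ (by norm_num)) _ (Nat.mod_lt _ (by norm_num)) _
    (Nat.mod_lt _ (by norm_num))

lemma mat_irrefl (b u : ℕ) : mat b u u = false := by
  rw [mat_mod]
  have h : ∀ b' < 6, ∀ u' < 8, mat b' u' u' = false := by decide
  exact h _ (Nat.mod_lt _ (by norm_num)) _ (Nat.mod_lt _ (by norm_num))

lemma profT_mod (b d : ℕ) : profT b d = profT (b % 6) d := by
  simp [profT, Nat.mod_mod_of_dvd]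

lemma profT_congr {a b' : ℕ} (h : a % 6 = b' % 6) (d : ℕ) : profT a d = profT b' d := by
  rw [profT_mod, h, ← profT_mod]

/-- the 8-vertex block graph of type `b` -/
def Hg (b : ℕ) : SimpleGraph (Fin 8) where
  Adj x y := mat b x.val y.val = true
  symm := by constructor; intro x y h; rwa [mat_symm]
  loopless := by constructor; intro x h; simp [mat_irrefl] at h

instance (b : ℕ) : DecidableRel (Hg b).Adj := fun x y => by unfold Hg; infer_instance

lemma Hg_mod (b : ℕ) : Hg b = Hg (b % 6) := by
  ext x y
  show mat b x.val y.val = true ↔ mat (b % 6) x.val y.val = true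
  rw [mat_mod6]

/-! ### Decided facts about the block graphs -/

def dF (b : ℕ) (s : Finset (Fin 8)) (v : Fin 8) : ℕ :=
  (s.filter (fun u => mat b v.val u.val = true)).card

def MF (b : ℕ) (s : Finset (Fin 8)) : ℕ := s.sup (dF b s)

abbrev FinProp (b : ℕ) : Prop :=
  ∀ s : Finset (Fin 8), (s.filter (fun v => dF b s v = MF b s)).card ≤ profT b (MF b s) ∨ s = ∅

set_option maxRecDepth 10000 in
theorem finprop_all : ∀ b < 6, FinProp b := by decide

set_option maxRecDepth 10000 in
theorem deg3 : ∀ b < 6, ∀ x : Fin 8,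
    ((Finset.univ.filter (fun y : Fin 8 => mat b x.val y.val = true)).card ≤ 3) := by decide

lemma dS_finset (b : ℕ) (fs : Finset (Fin 8)) (v : Fin 8) :
    dS (Hg b) ↑fs v = dF b fs v := by
  unfold dS dF
  rw [← Set.ncard_coe_finset]
  congr 1
  ext u
  simp only [Set.mem_inter_iff, SimpleGraph.mem_neighborSet, Finset.coe_filter,
    Set.mem_setOf_eq, Finset.mem_coe]
  exact Iff.rfl

lemma MDS_finset (b : ℕ) (fs : Finset (Fin 8)) (hfs : fs.Nonempty) :
    MDS (Hg b) ↑fs = MF b fs := by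
  apply le_antisymm
  · apply csSup_le (hfs.to_set.image _)
    rintro x ⟨v, hv, rfl⟩
    rw [dS_finset]
    exact Finset.le_sup (Finset.mem_coe.mp hv)
  · apply Finset.sup_le
    intro v hv
    rw [← dS_finset]
    exact le_csSup (((↑fs : Set (Fin 8)).toFinite.image _).bddAbove)
      (Set.mem_image_of_mem _ hv)

lemma MRS_finset (b : ℕ) (fs : Finset (Fin 8)) (hfs : fs.Nonempty) :
    MRS (Hg b) ↑fs = (fs.filter (fun v => dF b fs v = MF b fs)).card := by
  unfold MRS
  rw [← Set.ncard_coe_finset]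
  congr 1
  ext v
  simp only [Set.mem_setOf_eq, Finset.coe_filter, Finset.mem_coe]
  rw [dS_finset, MDS_finset b fs hfs]

theorem setFact (b : ℕ) (u : Set (Fin 8)) (hu : u.Nonempty) :
    MRS (Hg b) u ≤ profT b (MDS (Hg b) u) := by
  rw [Hg_mod, profT_mod]
  set fs : Finset (Fin 8) := u.toFinite.toFinset with hfs
  have hcoe : u = ↑fs := by simp [hfs]
  have hne : fs.Nonempty := by
    rw [← Finset.coe_nonempty, ← hcoe]; exact hu
  rw [hcoe, MRS_finset _ _ hne, MDS_finset _ _ hne]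
  rcases finprop_all (b % 6) (Nat.mod_lt _ (by norm_num)) fs with h | h
  · exact h
  · exact absurd h (Finset.nonempty_iff_ne_empty.mp hne)

theorem ndeg_Hg (b : ℕ) (x : Fin 8) : ((Hg b).neighborSet x).ncard ≤ 3 := by
  have hset : (Hg b).neighborSet x
      = ↑(Finset.univ.filter (fun y : Fin 8 => mat b x.val y.val = true)) := by
    ext y
    simp [Hg, SimpleGraph.mem_neighborSet]
  rw [hset, Set.ncard_coe_finset]
  have hb : ∀ y : Fin 8, mat b x.val y.val = mat (b % 6) x.val y.val := by
    intro y
    rw [mat_mod6]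
  simp only [hb]
  exact deg3 (b % 6) (Nat.mod_lt _ (by norm_num)) x

/-! ### Transport along adjacency-preserving injections -/

lemma dS_transport {V W : Type*} (G : SimpleGraph V) (H : SimpleGraph W) (e : W → V)
    (he : Function.Injective e) (hadj : ∀ x y, G.Adj (e x) (e y) ↔ H.Adj x y)
    (u : Set W) (x : W) :
    dS G (e '' u) (e x) = dS H u x := by
  unfold dS
  rw [← Set.ncard_image_of_injective (u ∩ H.neighborSet x) he]
  congr 1
  ext y
  simp only [Set.mem_inter_iff, SimpleGraph.mem_neighborSet, Set.mem_image]
  constructor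
  · rintro ⟨⟨z, hz, rfl⟩, ha⟩
    exact ⟨z, ⟨hz, (hadj x z).mp ha⟩, rfl⟩
  · rintro ⟨z, ⟨hz, ha⟩, rfl⟩
    exact ⟨⟨z, hz, rfl⟩, (hadj x z).mpr ha⟩

lemma MDS_transport {V W : Type*} (G : SimpleGraph V) (H : SimpleGraph W) (e : W → V)
    (he : Function.Injective e) (hadj : ∀ x y, G.Adj (e x) (e y) ↔ H.Adj x y)
    (u : Set W) : MDS G (e '' u) = MDS H u := by
  unfold MDS
  congr 1
  rw [Set.image_image]
  apply Set.image_congr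
  intro x hx
  exact dS_transport G H e he hadj u x

lemma MRS_transport {V W : Type*} (G : SimpleGraph V) (H : SimpleGraph W) (e : W → V)
    (he : Function.Injective e) (hadj : ∀ x y, G.Adj (e x) (e y) ↔ H.Adj x y)
    (u : Set W) : MRS G (e '' u) = MRS H u := by
  unfold MRS
  rw [← Set.ncard_image_of_injective {x | x ∈ u ∧ dS H u x = MDS H u} he]
  congr 1
  ext v
  simp only [Set.mem_setOf_eq, Set.mem_image]
  constructor
  · rintro ⟨⟨x, hx, rfl⟩, hd⟩
    rw [dS_transport G H e he hadj u x, MDS_transport G H e he hadj u] at hd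
    exact ⟨x, ⟨hx, hd⟩, rfl⟩
  · rintro ⟨x, ⟨hx, hd⟩, rfl⟩
    refine ⟨⟨x, hx, rfl⟩, ?_⟩
    rw [dS_transport G H e he hadj u x, MDS_transport G H e he hadj u]
    exact hd

/-! ### Periodic sums of the profile bounds -/

lemma sum_profT_period (m d : ℕ) :
    ∑ f ∈ Finset.range (6 * m), profT f d = m * ∑ b ∈ Finset.range 6, profT b d := by
  induction m with
  | zero => simp
  | succ m ih =>
    have h66 : 6 * (m + 1) = (6 * m) + 1 + 1 + 1 + 1 + 1 + 1 := by ring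
    rw [h66, Finset.sum_range_succ, Finset.sum_range_succ, Finset.sum_range_succ,
      Finset.sum_range_succ, Finset.sum_range_succ, Finset.sum_range_succ, ih,
      profT_congr (a := 6*m) (b' := 0) (by omega) d,
      profT_congr (a := 6*m+1) (b' := 1) (by omega) d,
      profT_congr (a := 6*m+1+1) (b' := 2) (by omega) d,
      profT_congr (a := 6*m+1+1+1) (b' := 3) (by omega) d,
      profT_congr (a := 6*m+1+1+1+1) (b' := 4) (by omega) d,
      profT_congr (a := 6*m+1+1+1+1+1) (b' := 5) (by omega) d,
      show (∑ b ∈ Finset.range 6, profT b d) =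
        profT 0 d + profT 1 d + profT 2 d + profT 3 d + profT 4 d + profT 5 d from by
          rw [Finset.sum_range_succ, Finset.sum_range_succ, Finset.sum_range_succ,
            Finset.sum_range_succ, Finset.sum_range_succ, Finset.sum_range_one]]
    ring

lemma total_bound (m d : ℕ) :
    m * (∑ b ∈ Finset.range 6, profT b d) + (if d = 0 then 5*m else 0) ≤ 24*m := by
  match d with
  | 0 =>
    rw [show (∑ b ∈ Finset.range 6, profT b 0) = 19 from by decide, if_pos rfl]
    omega
  | 1 =>
    rw [show (∑ b ∈ Finset.range 6, profT b 1) = 24 from by decide, if_neg (by omega)]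
    omega
  | 2 =>
    rw [show (∑ b ∈ Finset.range 6, profT b 2) = 24 from by decide, if_neg (by omega)]
    omega
  | 3 =>
    rw [show (∑ b ∈ Finset.range 6, profT b 3) = 24 from by decide, if_neg (by omega)]
    omega
  | (n+4) =>
    have hz : ∑ b ∈ Finset.range 6, profT b (n+4) = 0 := by
      apply Finset.sum_eq_zero
      intro b _
      rw [profT_mod]
      have hb : b % 6 < 6 := Nat.mod_lt _ (by norm_num)
      have hlen : ∀ c < 6,
          (([[3,4,5,2],[3,4,4,5],[3,4,4,5],[3,4,4,5],[3,4,4,5],[4,4,3,2]].getD c ([] : List ℕ))).length = 4 := by decide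
      have h4 : (([[3,4,5,2],[3,4,4,5],[3,4,4,5],[3,4,4,5],[3,4,4,5],[4,4,3,2]].getD (b % 6) ([] : List ℕ))).length ≤ n + 4 := by
        rw [hlen (b % 6) hb]
        omega
      unfold profT
      rw [Nat.mod_mod_of_dvd _ (dvd_refl 6)]
      exact List.getD_eq_default _ _ h4
    rw [hz, if_neg (by omega)]
    omega

/-! ### The gadget graph -/

/-- the big graph: `6*m` blocks of eight vertices, plus `5*m` isolated vertices -/
def gadget (m : ℕ) : SimpleGraph (Fin (53 * m)) where
  Adj i j := i.val / 8 = j.val / 8 ∧ i.val / 8 < 6 * m ∧ mat (i.val / 8) i.val j.val = true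
  symm := by
    constructor
    rintro i j ⟨h1, h2, h3⟩
    refine ⟨h1.symm, h1 ▸ h2, ?_⟩
    rw [← h1, mat_symm]
    exact h3
  loopless := by
    constructor
    rintro i ⟨-, -, h3⟩
    simp [mat_irrefl] at h3

def emb (m f : ℕ) (hf : f < 6 * m) (x : Fin 8) : Fin (53 * m) :=
  ⟨8 * f + x.val, by have := x.isLt; omega⟩

lemma emb_inj (m f : ℕ) (hf : f < 6 * m) : Function.Injective (emb m f hf) := by
  intro x y h
  have : 8 * f + x.val = 8 * f + y.val := congrArg Fin.val h
  exact Fin.ext (by omega)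

lemma gadget_adj_iff (m f : ℕ) (hf : f < 6 * m) (x y : Fin 8) :
    (gadget m).Adj (emb m f hf x) (emb m f hf y) ↔ (Hg f).Adj x y := by
  have hx := x.isLt
  have hy := y.isLt
  have hx8 : (8 * f + x.val) / 8 = f := by omega
  have hy8 : (8 * f + y.val) / 8 = f := by omega
  have hxm : (8 * f + x.val) % 8 = x.val % 8 := by omega
  have hym : (8 * f + y.val) % 8 = y.val % 8 := by omega
  have hmat : mat ((8 * f + x.val) / 8) (8 * f + x.val) (8 * f + y.val) = mat f x.val y.val := by
    rw [hx8, mat_mod f (8 * f + x.val), hxm, hym, ← mat_mod]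
  constructor
  · rintro ⟨-, -, h3⟩
    show mat f x.val y.val = true
    rw [← hmat]
    exact h3
  · intro h
    refine ⟨by show (8*f+x.val)/8 = (8*f+y.val)/8; rw [hx8, hy8], ?_, ?_⟩
    · show (8*f+x.val)/8 < 6*m
      rw [hx8]; exact hf
    · show mat ((8*f+x.val)/8) (8*f+x.val) (8*f+y.val) = true
      rw [hmat]; exact h

lemma fiber_eq (m f : ℕ) (hf : f < 6 * m) :
    {v : Fin (53 * m) | min (v.val / 8) (6 * m) = f} = Set.range (emb m f hf) := by
  ext v
  simp only [Set.mem_setOf_eq, Set.mem_range]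
  constructor
  · intro hv
    have hv8 : v.val / 8 = f := by omega
    refine ⟨⟨v.val % 8, by omega⟩, ?_⟩
    apply Fin.ext
    show 8 * f + v.val % 8 = v.val
    omega
  · rintro ⟨x, rfl⟩
    have hx := x.isLt
    show min ((8 * f + x.val) / 8) (6 * m) = f
    omega

lemma gadget_deg (m : ℕ) (v : Fin (53 * m)) : ndeg (gadget m) v ≤ 3 := by
  by_cases hv : v.val / 8 < 6 * m
  · set f := v.val / 8 with hfdef
    have hvm : v.val % 8 < 8 := by omega
    set x : Fin 8 := ⟨v.val % 8, hvm⟩ with hxdef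
    have hvx : v = emb m f hv x := by
      apply Fin.ext
      show v.val = 8 * f + v.val % 8
      omega
    have hset : (gadget m).neighborSet v = (emb m f hv) '' ((Hg f).neighborSet x) := by
      ext j
      simp only [SimpleGraph.mem_neighborSet, Set.mem_image]
      constructor
      · intro hadj
        have hj8 : j.val / 8 = f := by
          obtain ⟨h1, -, -⟩ := hadj
          omega
        have hjm : j.val % 8 < 8 := by omega
        refine ⟨⟨j.val % 8, hjm⟩, ?_, ?_⟩
        · have hje : j = emb m f hv ⟨j.val % 8, hjm⟩ := by
            apply Fin.ext
            show j.val = 8 * f + j.val % 8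
            omega
          rw [hvx, hje] at hadj
          exact (gadget_adj_iff m f hv x _).mp hadj
        · apply Fin.ext
          show 8 * f + j.val % 8 = j.val
          omega
      · rintro ⟨y, hy, rfl⟩
        rw [hvx]
        exact (gadget_adj_iff m f hv x y).mpr hy
    rw [ndeg, hset, Set.ncard_image_of_injective _ (emb_inj m f hv)]
    exact ndeg_Hg f x
  · have hset : (gadget m).neighborSet v = ∅ := by
      ext j
      simp only [SimpleGraph.mem_neighborSet, Set.mem_empty_iff_false, iff_false]
      rintro ⟨-, h2, -⟩
      exact hv h2
    rw [ndeg, hset, Set.ncard_empty]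
    omega

/-- per-fiber bound function -/
def cB (m f d : ℕ) : ℕ := if f < 6 * m then profT f d else (if d = 0 then 5 * m else 0)

lemma gadget_fiber_bound (m : ℕ) (f : ℕ) (t : Set (Fin (53 * m)))
    (hts : t ⊆ {v | min (v.val / 8) (6 * m) = f}) (htne : t.Nonempty) :
    MRS (gadget m) t ≤ cB m f (MDS (gadget m) t) := by
  by_cases hf : f < 6 * m
  · have htr : t ⊆ Set.range (emb m f hf) := by
      rw [← fiber_eq m f hf]
      exact hts
    set u := (emb m f hf) ⁻¹' t with hu
    have himg : (emb m f hf) '' u = t := Set.image_preimage_eq_of_subset htr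
    have hune : u.Nonempty := by
      obtain ⟨v, hv⟩ := htne
      obtain ⟨x, rfl⟩ := htr hv
      exact ⟨x, hv⟩
    rw [cB, if_pos hf, ← himg,
      MRS_transport (gadget m) (Hg f) _ (emb_inj m f hf) (gadget_adj_iff m f hf) u,
      MDS_transport (gadget m) (Hg f) _ (emb_inj m f hf) (gadget_adj_iff m f hf) u]
    exact setFact f u hune
  · have hvt : ∀ v ∈ t, 6 * m ≤ v.val / 8 := by
      intro v hv
      have := hts hv
      simp only [Set.mem_setOf_eq] at this
      omega
    have hdeg0 : ∀ v ∈ t, dS (gadget m) t v = 0 := by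
      intro v hv
      have hN : t ∩ (gadget m).neighborSet v = ∅ := by
        ext j
        simp only [Set.mem_inter_iff, SimpleGraph.mem_neighborSet,
          Set.mem_empty_iff_false, iff_false]
        rintro ⟨-, -, h2, -⟩
        have := hvt v hv
        omega
      rw [dS, hN, Set.ncard_empty]
    have hMD : MDS (gadget m) t = 0 :=
      Nat.le_zero.mp (MDS_le _ _ 0 (fun v hv => le_of_eq (hdeg0 v hv)))
    have hm1 : 1 ≤ m := by
      obtain ⟨v, -⟩ := htne
      have := v.isLt
      omega
    have hcard : t.ncard ≤ 5 * m := by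
      have h5 : (Set.univ : Set (Fin (5 * m))).ncard = 5 * m := by
        rw [Set.ncard_univ, Nat.card_eq_fintype_card, Fintype.card_fin]
      rw [← h5]
      refine Set.ncard_le_ncard_of_injOn
        (fun v => (⟨v.val - 48 * m, by have := v.isLt; omega⟩ : Fin (5 * m)))
        (fun v _ => Set.mem_univ _) ?_ (Set.toFinite _)
      intro v hvmem w hwmem hvw
      have hv48 : 48 * m ≤ v.val := by have := hvt v hvmem; omega
      have hw48 : 48 * m ≤ w.val := by have := hvt w hwmem; omega
      have hsub : v.val - 48 * m = w.val - 48 * m := congrArg Fin.val hvw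
      exact Fin.ext (by omega)
    rw [cB, if_neg hf, hMD, if_pos rfl]
    calc MRS (gadget m) t ≤ t.ncard := by
          apply Set.ncard_le_ncard _ (Set.toFinite t)
          intro v hv
          exact hv.1
      _ ≤ 5 * m := hcard

/-! ### Main theorem -/

theorem stmt_4 (k : ℕ) (hk : 1 ≤ k) (hk24 : k % 24 = 1) :
    ∃ (n : ℕ) (G : SimpleGraph (Fin n)),
      (∀ v, ndeg G v ≤ 3) ∧
      24 * n = 53 * (k - 1) ∧
      ∀ s : Set (Fin n), s.Nonempty → maxRepCount (G.induce s) ≤ k - 1 := by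
  set m := k / 24 with hm
  have hkm : k - 1 = 24 * m := by omega
  refine ⟨53 * m, gadget m, fun v => gadget_deg m v, by rw [hkm]; ring, ?_⟩
  intro s hs
  rw [maxRepCount_induce, hkm]
  have hq : ∀ v : Fin (53 * m), min (v.val / 8) (6 * m) < 6 * m + 1 := by
    intro v
    omega
  have hadj : ∀ u v : Fin (53 * m), (gadget m).Adj u v →
      min (u.val / 8) (6 * m) = min (v.val / 8) (6 * m) := by
    rintro u v ⟨h1, -, -⟩
    rw [h1]
  calc MRS (gadget m) s
      ≤ ∑ f ∈ Finset.range (6 * m + 1), cB m f (MDS (gadget m) s) :=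
        fiber_bound (gadget m) (fun v => min (v.val / 8) (6 * m)) (6 * m + 1) hq hadj
          (cB m) (gadget_fiber_bound m) s
    _ ≤ 24 * m := by
        rw [Finset.sum_range_succ]
        have hcongr : ∑ f ∈ Finset.range (6 * m), cB m f (MDS (gadget m) s)
            = ∑ f ∈ Finset.range (6 * m), profT f (MDS (gadget m) s) := by
          apply Finset.sum_congr rfl
          intro f hfm
          rw [cB, if_pos (Finset.mem_range.mp hfm)]
        rw [hcongr, sum_profT_period, cB, if_neg (by omega)]
        exact total_bound m (MDS (gadget m) s)
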